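/- arXiv:2106.06387 — 4 statements merged into one kernel-verified Lean document; each statement's English description precedes it below -/
import Mathlib

section
/- For a square-free positive integer n, the normalizer in GL₂(ℚ) of the group G = {[[a, nb],[−b, a]] : a,b ∈ ℚ, a²+nb² ≠ 0} is the set of matrices of the form [[a, nb],[−b, a]] or [[a, nb],[b, −a]] with a,b ∈ ℚ and a²+nb² ≠ 0 (respectively −a²−nb² ≠ 0), and the quotient of this normalizer by G has exactly 2 elements. -/
open Matrix

private lemma fin2_eq {α : Type*} {a b c d e f g h : α}
    (h1 : a = e) (h2 : b = f) (h3 : c = g) (h4 : d = h) :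
    !![a, b; c, d] = !![e, f; g, h] := by rw [h1, h2, h3, h4]

/-- For a square-free positive integer `n`, the normalizer in `GL₂(ℚ)` of the subgroup
`G = {[[a, nb],[−b, a]] : a,b ∈ ℚ, a² + nb² ≠ 0}` consists exactly of the matrices of the
form `[[a, nb],[−b, a]]` or `[[a, nb],[b, −a]]` with `a² + nb² ≠ 0`, and the quotient of
this normalizer by `G` has exactly `2` elements. -/
theorem normalizer_of_torus (n : ℕ) (hn : Squarefree n) (hpos : 0 < n)
    (H : Subgroup (GL (Fin 2) ℚ))
    (hH : (H : Set (GL (Fin 2) ℚ)) =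
      {g : GL (Fin 2) ℚ | ∃ a b : ℚ, a ^ 2 + n * b ^ 2 ≠ 0 ∧
        (g : Matrix (Fin 2) (Fin 2) ℚ) = !![a, n * b; -b, a]}) :
    ((Subgroup.normalizer (H : Set (GL (Fin 2) ℚ))) : Set (GL (Fin 2) ℚ)) =
      {w : GL (Fin 2) ℚ | ∃ a b : ℚ, a ^ 2 + n * b ^ 2 ≠ 0 ∧
        ((w : Matrix (Fin 2) (Fin 2) ℚ) = !![a, n * b; -b, a] ∨
          (w : Matrix (Fin 2) (Fin 2) ℚ) = !![a, n * b; b, -a])} ∧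
    Nat.card ((Subgroup.normalizer (H : Set (GL (Fin 2) ℚ))) ⧸ H.subgroupOf (Subgroup.normalizer (H : Set (GL (Fin 2) ℚ)))) = 2 := by
  have hn0 : (n : ℚ) ≠ 0 := Nat.cast_ne_zero.mpr hpos.ne'
  have memH : ∀ g : GL (Fin 2) ℚ, g ∈ H ↔ ∃ a b : ℚ, a ^ 2 + n * b ^ 2 ≠ 0 ∧
      (g : Matrix (Fin 2) (Fin 2) ℚ) = !![a, n * b; -b, a] := by
    intro g
    rw [← SetLike.mem_coe, hH]
    rfl
  have detne : ∀ w : GL (Fin 2) ℚ, ((w : Matrix (Fin 2) (Fin 2) ℚ)).det ≠ 0 := by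
    intro w
    exact ((Matrix.isUnit_iff_isUnit_det _).mp w.isUnit).ne_zero
  -- conjugation by a matrix of the second form preserves H
  have conj2 : ∀ (w : GL (Fin 2) ℚ) (a b : ℚ),
      (w : Matrix (Fin 2) (Fin 2) ℚ) = !![a, n * b; b, -a] →
      ∀ g ∈ H, w * g * w⁻¹ ∈ H := by
    intro w a b hw g hg
    have hD : a ^ 2 + n * b ^ 2 ≠ 0 := by
      have hd := detne w
      rw [hw, det_fin_two_of] at hd
      intro h
      exact hd (by linear_combination -h)
    have hwinv : (w : Matrix (Fin 2) (Fin 2) ℚ)⁻¹ =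
        !![a / (a ^ 2 + n * b ^ 2), n * b / (a ^ 2 + n * b ^ 2);
           b / (a ^ 2 + n * b ^ 2), -a / (a ^ 2 + n * b ^ 2)] := by
      apply inv_eq_right_inv
      rw [hw, mul_fin_two, one_fin_two]
      apply fin2_eq <;> (field_simp; try ring_nf; try (rw [← add_mul, mul_inv_eq_iff_eq_mul₀ (by intro h; apply hD; linear_combination h)]; ring))
    obtain ⟨c, d, hcd, hgm⟩ := (memH g).mp hg
    rw [memH]
    refine ⟨c, -d, by simpa using hcd, ?_⟩
    have hmat : ((w * g * w⁻¹ : GL (Fin 2) ℚ) : Matrix (Fin 2) (Fin 2) ℚ) =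
        (w : Matrix (Fin 2) (Fin 2) ℚ) * g * (w : Matrix (Fin 2) (Fin 2) ℚ)⁻¹ := by
      simp [Units.val_mul, coe_units_inv]
    rw [hmat, hwinv, hw, hgm, mul_fin_two, mul_fin_two]
    apply fin2_eq <;> (field_simp; try ring_nf; try (rw [← add_mul, mul_inv_eq_iff_eq_mul₀ (by intro h; apply hD; linear_combination h)]; ring))
  -- the element J
  have hJ1 : !![0, (n:ℚ); -1, 0] * !![0, -1; (n:ℚ)⁻¹, 0] = (1 : Matrix (Fin 2) (Fin 2) ℚ) := by
    rw [mul_fin_two, one_fin_two]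
    apply fin2_eq <;> (field_simp <;> norm_num)
  have hJ2 : !![0, -1; (n:ℚ)⁻¹, 0] * !![0, (n:ℚ); -1, 0] = (1 : Matrix (Fin 2) (Fin 2) ℚ) := by
    rw [mul_fin_two, one_fin_two]
    apply fin2_eq <;> (field_simp <;> norm_num)
  set J : GL (Fin 2) ℚ := ⟨!![0, (n:ℚ); -1, 0], !![0, -1; (n:ℚ)⁻¹, 0], hJ1, hJ2⟩ with hJdef
  have hJval : (J : Matrix (Fin 2) (Fin 2) ℚ) = !![0, (n:ℚ); -1, 0] := rfl
  have hJH : J ∈ H := by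
    rw [memH]
    exact ⟨0, 1, by norm_num [hn0], by rw [hJval]; norm_num⟩
  -- main set equality
  have hset : (Subgroup.normalizer (H : Set (GL (Fin 2) ℚ)) : Set (GL (Fin 2) ℚ)) =
      {w : GL (Fin 2) ℚ | ∃ a b : ℚ, a ^ 2 + n * b ^ 2 ≠ 0 ∧
        ((w : Matrix (Fin 2) (Fin 2) ℚ) = !![a, n * b; -b, a] ∨
          (w : Matrix (Fin 2) (Fin 2) ℚ) = !![a, n * b; b, -a])} := by
    ext w
    simp only [SetLike.mem_coe, Set.mem_setOf_eq]
    constructor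
    · intro hwN
      have hu : w * J * w⁻¹ ∈ H := (Subgroup.mem_normalizer_iff.mp hwN J).mp hJH
      obtain ⟨c, d, hcd, hum⟩ := (memH _).mp hu
      have humat : ((w * J * w⁻¹ : GL (Fin 2) ℚ) : Matrix (Fin 2) (Fin 2) ℚ) =
          (w : Matrix (Fin 2) (Fin 2) ℚ) * J * (w : Matrix (Fin 2) (Fin 2) ℚ)⁻¹ := by
        simp [Units.val_mul, coe_units_inv]
      -- trace gives c = 0
      have hc : c = 0 := by
        have ht := Matrix.trace_conj w.isUnit (J : Matrix (Fin 2) (Fin 2) ℚ)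
        rw [← humat, hum, hJval, trace_fin_two_of, trace_fin_two_of] at ht
        linarith
      -- det gives d = ±1
      have hd : d = 1 ∨ d = -1 := by
        have ht := Matrix.det_conj w.isUnit (J : Matrix (Fin 2) (Fin 2) ℚ)
        rw [← humat, hum, hJval, det_fin_two_of, det_fin_two_of] at ht
        have hdd : (n:ℚ) * (d * d) = n * 1 := by linear_combination ht - c * hc
        exact mul_self_eq_one_iff.mp (mul_left_cancel₀ hn0 hdd)
      -- the commutation relation
      have hkey : (w : Matrix (Fin 2) (Fin 2) ℚ) * (J : Matrix (Fin 2) (Fin 2) ℚ) =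
          !![c, n * d; -d, c] * (w : Matrix (Fin 2) (Fin 2) ℚ) := by
        rw [← Units.val_mul]
        conv_lhs => rw [show w * J = (w * J * w⁻¹) * w from by group]
        rw [Units.val_mul, hum]
      set p := (w : Matrix (Fin 2) (Fin 2) ℚ) 0 0 with hp
      set q := (w : Matrix (Fin 2) (Fin 2) ℚ) 0 1 with hq
      set r := (w : Matrix (Fin 2) (Fin 2) ℚ) 1 0 with hr
      set s := (w : Matrix (Fin 2) (Fin 2) ℚ) 1 1 with hs
      have hwm : (w : Matrix (Fin 2) (Fin 2) ℚ) = !![p, q; r, s] := by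
        rw [Matrix.eta_fin_two (w : Matrix (Fin 2) (Fin 2) ℚ)]
      rw [hwm, hJval, mul_fin_two, mul_fin_two, ← Matrix.ext_iff] at hkey
      have e1 := hkey 0 0
      have e2 := hkey 0 1
      simp at e1 e2
      have hdet : p * s - q * r ≠ 0 := by
        have hd2 := detne w
        rwa [hwm, det_fin_two_of] at hd2
      subst hc
      rcases hd with hd | hd <;> subst hd
      · -- first form
        have hq' : q = -(n * r) := by linear_combination -e1
        have hs' : s = p := (mul_left_cancel₀ hn0 (show (n:ℚ) * p = n * s by linear_combination e2)).symm
        refine ⟨p, -r, fun h => hdet (by rw [hq', hs']; linear_combination h), Or.inl ?_⟩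
        rw [hwm, hq', hs']
        norm_num
      · -- second form
        have hq' : q = n * r := by linear_combination -e1
        have hs' : s = -p := mul_left_cancel₀ hn0 (show (n:ℚ) * s = n * (-p) by linear_combination e2)
        refine ⟨p, r, fun h => hdet (by rw [hq', hs']; linear_combination -h), Or.inr ?_⟩
        rw [hwm, hq', hs']
    · rintro ⟨a, b, hab, h1 | h2⟩
      · exact Subgroup.le_normalizer ((memH w).mpr ⟨a, b, hab, h1⟩)
      · rw [Subgroup.mem_normalizer_iff]
        intro g
        constructor
        · intro hg
          exact conj2 w a b h2 g hg
        · intro hg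
          have h2' := conj2 w a b h2 _ hg
          have hsq : w * w * g = g * (w * w) := by
            apply Units.ext
            simp only [Units.val_mul]
            rw [h2, Matrix.eta_fin_two (g : Matrix (Fin 2) (Fin 2) ℚ)]
            simp only [mul_fin_two]
            apply fin2_eq <;> ring
          have hback : w * (w * g * w⁻¹) * w⁻¹ = g := by
            have h7 : w * (w * g * w⁻¹) * w⁻¹ = (w * w) * g * (w * w)⁻¹ := by group
            rw [h7, hsq]
            group
          rwa [hback] at h2'
  refine ⟨hset, ?_⟩
  -- the element w₀
  have hw01 : !![(1:ℚ), 0; 0, -1] * !![(1:ℚ), 0; 0, -1] = (1 : Matrix (Fin 2) (Fin 2) ℚ) := by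
    rw [mul_fin_two, one_fin_two]; norm_num
  set w₀ : GL (Fin 2) ℚ := ⟨!![(1:ℚ), 0; 0, -1], !![(1:ℚ), 0; 0, -1], hw01, hw01⟩ with hw0def
  have hw0val : (w₀ : Matrix (Fin 2) (Fin 2) ℚ) = !![(1:ℚ), 0; 0, -1] := rfl
  have hw0inv : ((w₀⁻¹ : GL (Fin 2) ℚ) : Matrix (Fin 2) (Fin 2) ℚ) = !![(1:ℚ), 0; 0, -1] := rfl
  have hw0N : w₀ ∈ Subgroup.normalizer (H : Set (GL (Fin 2) ℚ)) := by
    have hmem : w₀ ∈ (Subgroup.normalizer (H : Set (GL (Fin 2) ℚ)) : Set (GL (Fin 2) ℚ)) := by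
      rw [hset]
      exact ⟨1, 0, by norm_num, Or.inr (by rw [hw0val]; norm_num)⟩
    exact hmem
  have hw0H : w₀ ∉ H := by
    intro h
    obtain ⟨a, b, hab, heq⟩ := (memH w₀).mp h
    rw [hw0val, ← Matrix.ext_iff] at heq
    have h1 := heq 0 0
    have h2 := heq 1 1
    simp at h1 h2
    rw [← h1] at h2
    norm_num at h2
  rw [Nat.card_eq_two_iff]
  refine ⟨(1 : Subgroup.normalizer (H : Set (GL (Fin 2) ℚ)) ⧸ H.subgroupOf (Subgroup.normalizer (H : Set (GL (Fin 2) ℚ)))),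
    QuotientGroup.mk ⟨w₀, hw0N⟩, ?_, ?_⟩
  · intro h
    have hm := (QuotientGroup.eq_one_iff (⟨w₀, hw0N⟩ : Subgroup.normalizer (H : Set (GL (Fin 2) ℚ)))).mp h.symm
    rw [Subgroup.mem_subgroupOf] at hm
    exact hw0H hm
  · ext x
    simp only [Set.mem_insert_iff, Set.mem_singleton_iff, Set.mem_univ, iff_true]
    refine QuotientGroup.induction_on x ?_
    rintro ⟨w, hwN⟩
    have hw' : w ∈ (Subgroup.normalizer (H : Set (GL (Fin 2) ℚ)) : Set (GL (Fin 2) ℚ)) := hwN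
    rw [hset] at hw'
    obtain ⟨a, b, hab, h1 | h2⟩ := hw'
    · left
      rw [QuotientGroup.eq_one_iff, Subgroup.mem_subgroupOf]
      exact (memH w).mpr ⟨a, b, hab, h1⟩
    · right
      rw [QuotientGroup.eq]
      rw [Subgroup.mem_subgroupOf]
      show w⁻¹ * w₀ ∈ H
      have hmem : w₀⁻¹ * w ∈ H := by
        rw [memH]
        refine ⟨a, b, hab, ?_⟩
        show ((w₀⁻¹ : GL (Fin 2) ℚ) : Matrix (Fin 2) (Fin 2) ℚ) * w = _
        rw [hw0inv, h2, mul_fin_two]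
        norm_num
      have hmem2 := H.inv_mem hmem
      simpa [_root_.mul_inv_rev] using hmem2
end

section
/- Let T₁, …, T_{n+1} be ℚ-tori each isomorphic to the norm-one torus of a distinct imaginary quadratic field K_i = ℚ(√(−m_i)), where √(−m_1), …, √(−m_{n+1}) are linearly disjoint (i.e. [ℚ(√(−m_1),…,√(−m_{n+1})):ℚ] = 2^{n+1}). If M is a ℚ-subtorus of T₁ × ⋯ × T_{n+1} whose projection onto each factor T_i is surjective, then M = T₁ × ⋯ × T_{n+1}. -/
open IntermediateField

/-- Auxiliary: each Galois sign pattern is realized by an automorphism of the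
algebraic closure. -/
theorem exists_sign_automorphism (n : ℕ) (m : Fin (n + 1) → ℕ)
    (hm : ∀ i, 0 < m i)
    (ω : Fin (n + 1) → AlgebraicClosure ℚ)
    (hω : ∀ i, ω i ^ 2 = -((m i : ℚ) : AlgebraicClosure ℚ))
    (hdisj : Module.finrank ℚ (IntermediateField.adjoin ℚ (Set.range ω)) = 2 ^ (n + 1))
    (b : Fin (n + 1) → Bool) :
    ∃ σ : AlgebraicClosure ℚ ≃ₐ[ℚ] AlgebraicClosure ℚ,
      ∀ i, σ (ω i) = if b i then ω i else -ω i := by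
  classical
  set L := IntermediateField.adjoin ℚ (Set.range ω) with hL
  have hfd : FiniteDimensional ℚ L := by
    apply FiniteDimensional.of_finrank_pos
    rw [hdisj]; positivity
  set Ω : Fin (n + 1) → L := fun i => ⟨ω i, subset_adjoin ℚ _ ⟨i, rfl⟩⟩ with hΩ
  have hωalg : ∀ i, algebraMap ℚ (AlgebraicClosure ℚ) (-(m i : ℚ)) = ω i ^ 2 := by
    intro i
    rw [hω i, map_neg]
    norm_num [eq_ratCast]
  have hΩsq : ∀ i, Ω i ^ 2 = algebraMap ℚ L (-(m i : ℚ)) := by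
    intro i
    apply Subtype.ext
    show ω i ^ 2 = algebraMap ℚ (AlgebraicClosure ℚ) (-(m i : ℚ))
    rw [hωalg i]
  have hval : ∀ f : L →ₐ[ℚ] AlgebraicClosure ℚ, ∀ i, f (Ω i) = ω i ∨ f (Ω i) = -ω i := by
    intro f i
    have h2 : f (Ω i) ^ 2 = ω i ^ 2 := by
      rw [← map_pow, hΩsq i, AlgHom.commutes, hωalg i]
    have h3 : (f (Ω i) - ω i) * (f (Ω i) + ω i) = 0 := by linear_combination h2
    rcases mul_eq_zero.mp h3 with h | h
    · exact Or.inl (sub_eq_zero.mp h)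
    · exact Or.inr (eq_neg_of_add_eq_zero_left h)
  -- the sign map
  set Ψ : (L →ₐ[ℚ] AlgebraicClosure ℚ) → (Fin (n + 1) → Bool) :=
    fun f i => decide (f (Ω i) = ω i) with hΨ
  have hΨinj : Function.Injective Ψ := by
    intro f g hfg
    apply adjoin_algHom_ext ℚ
    rintro x ⟨i, rfl⟩
    have hi : decide (f (Ω i) = ω i) = decide (g (Ω i) = ω i) := congrFun hfg i
    have hfΩ := hval f i
    have hgΩ := hval g i
    show f (Ω i) = g (Ω i)
    by_cases h : f (Ω i) = ω i
    · have : decide (g (Ω i) = ω i) = true := by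
        rw [← hi]; exact decide_eq_true h
      rw [h, of_decide_eq_true this]
    · have : decide (g (Ω i) = ω i) = false := by
        rw [← hi]; exact decide_eq_false h
      have hg : g (Ω i) ≠ ω i := of_decide_eq_false this
      rw [hfΩ.resolve_left h, hgΩ.resolve_left hg]
  have hcard : Fintype.card (L →ₐ[ℚ] AlgebraicClosure ℚ)
      = Fintype.card (Fin (n + 1) → Bool) := by
    rw [AlgHom.card, hdisj]
    simp [Fintype.card_fun]
  have hΨbij : Function.Bijective Ψ :=
    (Fintype.bijective_iff_injective_and_card Ψ).mpr ⟨hΨinj, hcard⟩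
  obtain ⟨f, hf⟩ := hΨbij.2 b
  -- lift f to an automorphism
  haveI : IsAlgClosure ℚ (AlgebraicClosure ℚ) :=
    ⟨inferInstance, by
      convert (AlgebraicClosure.isAlgebraic ℚ : @Algebra.IsAlgebraic ℚ (AlgebraicClosure ℚ) _ _ (AlgebraicClosure.instAlgebra ℚ))
      · rfl
      · exact Subsingleton.elim _ _⟩
  haveI : Normal ℚ (AlgebraicClosure ℚ) := IsAlgClosure.normal ℚ (AlgebraicClosure ℚ)
  refine ⟨AlgEquiv.ofBijective (f.liftNormal (AlgebraicClosure ℚ))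
    (AlgHom.normal_bijective ℚ (AlgebraicClosure ℚ) (AlgebraicClosure ℚ) _), ?_⟩
  intro i
  have hcomm : (f.liftNormal (AlgebraicClosure ℚ)) (algebraMap L (AlgebraicClosure ℚ) (Ω i))
      = f (Ω i) := by
    rw [AlgHom.liftNormal_commutes]; rfl
  have hωi : algebraMap L (AlgebraicClosure ℚ) (Ω i) = ω i := rfl
  rw [AlgEquiv.coe_ofBijective, ← hωi, hcomm]
  have hbi : decide (f (Ω i) = ω i) = b i := congrFun hf i
  by_cases hb : b i
  · rw [hb] at hbi ⊢
    simpa using of_decide_eq_true hbi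
  · rw [Bool.not_eq_true] at hb
    rw [hb] at hbi ⊢
    have : f (Ω i) ≠ ω i := of_decide_eq_false hbi
    simpa using (hval f i).resolve_left this

/-- Let `T₁, …, T_{n+1}` be `ℚ`-tori, each isomorphic to the norm-one torus of a distinct
imaginary quadratic field `Kᵢ = ℚ(ωᵢ)`, `ωᵢ² = −mᵢ`, where the `√(−mᵢ)` are linearly disjoint
(`[K₁⋯K_{n+1} : ℚ] = 2^{n+1}`).  If `M` is a `ℚ`-subtorus of `T₁ × ⋯ × T_{n+1}` whose
projection onto each factor `Tᵢ` is surjective, then `M = T₁ × ⋯ × T_{n+1}`.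

Via the anti-equivalence between `ℚ`-tori and finitely generated free `ℤ`-modules with
continuous `Gal(ℚ̄/ℚ)`-action, this is formalized on character modules: the character module of
`T₁ × ⋯ × T_{n+1}` is `Λ₁ ⊕ ⋯ ⊕ Λ_{n+1} = (Fin (n+1) → ℤ)`, with `σ ∈ Gal(ℚ̄/ℚ)` acting on
`Λᵢ` by the sign `sᵢ` with `σ(ωᵢ) = sᵢ·ωᵢ`; a subtorus `M` with surjective projections
corresponds to a Galois-equivariant surjection `φ` onto the (finitely generated free) character
module `Q` of `M` which is injective on each summand `Λᵢ`; and the conclusion `M = T` says that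
`φ` is bijective. -/
theorem subtorus_of_product_of_norm_one_tori (n : ℕ) (m : Fin (n + 1) → ℕ)
    (hm : ∀ i, Squarefree (m i) ∧ 0 < m i) (hminj : Function.Injective m)
    (ω : Fin (n + 1) → AlgebraicClosure ℚ)
    (hω : ∀ i, ω i ^ 2 = -((m i : ℚ) : AlgebraicClosure ℚ))
    (hdisj : Module.finrank ℚ (IntermediateField.adjoin ℚ (Set.range ω)) = 2 ^ (n + 1))
    (Q : Type*) [AddCommGroup Q] [Module ℤ Q] [Module.Free ℤ Q] [Module.Finite ℤ Q]
    (φ : (Fin (n + 1) → ℤ) →ₗ[ℤ] Q)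
    (hsurj : Function.Surjective φ)
    (hstab : ∀ (σ : AlgebraicClosure ℚ ≃ₐ[ℚ] AlgebraicClosure ℚ) (s : Fin (n + 1) → ℤ),
      (∀ i, σ (ω i) = ((s i : ℚ) : AlgebraicClosure ℚ) * ω i) →
      ∀ x : Fin (n + 1) → ℤ, φ x = 0 → φ (fun i => s i * x i) = 0)
    (hproj : ∀ (i : Fin (n + 1)) (c : ℤ), φ (Pi.single i c) = 0 → c = 0) :
    Function.Bijective φ := by
  classical
  refine ⟨(injective_iff_map_eq_zero φ).mpr ?_, hsurj⟩
  intro x hx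
  funext i
  show x i = (0 : Fin (n + 1) → ℤ) i
  rw [Pi.zero_apply]
  -- get the automorphism flipping only the i-th sign
  obtain ⟨σ, hσ⟩ := exists_sign_automorphism n m (fun j => (hm j).2) ω hω hdisj
    (fun j => decide (j ≠ i))
  set s : Fin (n + 1) → ℤ := fun j => if j = i then -1 else 1 with hs
  have hσs : ∀ j, σ (ω j) = ((s j : ℚ) : AlgebraicClosure ℚ) * ω j := by
    intro j
    rcases eq_or_ne j i with h | h
    · subst h
      have := hσ j
      simp only [hs] at this ⊢
      simpa using this
    · have := hσ j
      simp only [hs] at this ⊢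
      simp [h] at this ⊢
      exact this
  have h2 := hstab σ s hσs x hx
  have h3 : φ (Pi.single i (2 * x i)) = 0 := by
    have heq : (Pi.single i (2 * x i) : Fin (n + 1) → ℤ) = x - fun j => s j * x j := by
      funext j
      rcases eq_or_ne j i with h | h
      · subst h; simp [hs]; ring
      · simp [Pi.single_apply, h, hs]
    rw [heq, map_sub, hx, h2, sub_zero]
  have := hproj i (2 * x i) h3
  omega
end

section
/- Let k ⊆ F be fields with F/k algebraic, β algebraic over F with minimal polynomial p over F, and suppose p has coefficients in k, p splits in K = k(β), and K/k is Galois. If deg p = [K : k], then K ∩ F = k and the restriction map Gal(K/k) → Gal(F(β)/F) is an isomorphism; in particular if Gal(F(β)/F) is abelian then so is Gal(K/k). -/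
set_option synthInstance.maxHeartbeats 1000000
set_option maxHeartbeats 4000000

open IntermediateField

/-- Let `k ⊆ F` be fields (inside a fixed algebraically closed field `Ω`) with `F/k`
algebraic, and let `β ∈ Ω` be algebraic over `F` with minimal polynomial `p` over `F`.
Suppose `p` has coefficients in `k` (say `p = p₀` with `p₀ ∈ k[X]`), `p₀` splits in
`K = k(β)`, `K/k` is Galois, and `deg p = [K : k]`.  Then `K ∩ F = k` and restriction gives a
group isomorphism `Gal(K/k) ≅ Gal(F(β)/F)`; in particular if `Gal(F(β)/F)` is abelian then so
is `Gal(K/k)`. -/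
theorem galois_group_of_descended_extension
    {Ω : Type*} [Field Ω] [IsAlgClosed Ω]
    (k F : Subfield Ω) (hkF : k ≤ F)
    (halg : ∀ x : Ω, x ∈ F → IsAlgebraic k x)
    (β : Ω) (hβ : IsIntegral F β)
    (p₀ : Polynomial k)
    (hmap : p₀.map (Subfield.inclusion hkF) = minpoly F β)
    (hsplit : Polynomial.Splits
      (p₀.map (algebraMap k (IntermediateField.adjoin k ({β} : Set Ω)))))
    (hgal : IsGalois k (IntermediateField.adjoin k ({β} : Set Ω)))
    (hdeg : p₀.natDegree = Module.finrank k (IntermediateField.adjoin k ({β} : Set Ω))) :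
    ((IntermediateField.adjoin k ({β} : Set Ω) : Set Ω) ∩ (F : Set Ω)) = (k : Set Ω) ∧
    (∃ e : (IntermediateField.adjoin k ({β} : Set Ω) ≃ₐ[k]
              IntermediateField.adjoin k ({β} : Set Ω)) ≃*
            (IntermediateField.adjoin F ({β} : Set Ω) ≃ₐ[F]
              IntermediateField.adjoin F ({β} : Set Ω)),
      ∀ (σ : IntermediateField.adjoin k ({β} : Set Ω) ≃ₐ[k]
              IntermediateField.adjoin k ({β} : Set Ω))
        (x : Ω) (hx1 : x ∈ IntermediateField.adjoin k ({β} : Set Ω))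
        (hx2 : x ∈ IntermediateField.adjoin F ({β} : Set Ω)),
        ((e σ) ⟨x, hx2⟩ : Ω) = (σ ⟨x, hx1⟩ : Ω)) ∧
    ((∀ σ τ : (IntermediateField.adjoin F ({β} : Set Ω) ≃ₐ[F]
          IntermediateField.adjoin F ({β} : Set Ω)), σ * τ = τ * σ) →
      ∀ σ τ : (IntermediateField.adjoin k ({β} : Set Ω) ≃ₐ[k]
          IntermediateField.adjoin k ({β} : Set Ω)), σ * τ = τ * σ) := by
  classical
  set K : IntermediateField k Ω := IntermediateField.adjoin k ({β} : Set Ω) with hKdef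
  set L : IntermediateField F Ω := IntermediateField.adjoin F ({β} : Set Ω) with hLdef
  set ι : (↥k) →+* (↥F) := Subfield.inclusion hkF with hιdef
  have hβK : β ∈ K := IntermediateField.subset_adjoin _ _ (Set.mem_singleton β)
  have hβL : β ∈ L := IntermediateField.subset_adjoin _ _ (Set.mem_singleton β)
  have hcomp : (algebraMap (↥F) Ω).comp ι = algebraMap (↥k) Ω := rfl
  have hmapaev : ∀ (q : Polynomial (↥k)) (y : Ω),
      Polynomial.aeval y (q.map ι) = Polynomial.aeval y q := by
    intro q y
    rw [Polynomial.aeval_def, Polynomial.eval₂_map, hcomp, ← Polynomial.aeval_def]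
  have haev : Polynomial.aeval β p₀ = 0 := by
    have h0 := minpoly.aeval F β
    rw [← hmap, hmapaev] at h0
    exact h0
  have hp₀0 : p₀ ≠ 0 := by
    intro h
    exact minpoly.ne_zero hβ (by rw [← hmap, h, Polynomial.map_zero])
  have hβk : IsIntegral (↥k) β := IsAlgebraic.isIntegral ⟨p₀, hp₀0, haev⟩
  haveI : FiniteDimensional (↥k) K := IntermediateField.adjoin.finiteDimensional hβk
  haveI : FiniteDimensional (↥F) L := IntermediateField.adjoin.finiteDimensional hβ
  have hmono : p₀.Monic := by
    have h1 := minpoly.monic hβ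
    rw [← hmap] at h1
    exact (Function.Injective.monic_map_iff ι.injective).mpr h1
  have hdeg' : p₀.natDegree = (minpoly (↥k) β).natDegree := by
    rw [hdeg, hKdef, IntermediateField.adjoin.finrank hβk]
  have hp₀min : p₀ = minpoly (↥k) β :=
    (Polynomial.eq_of_dvd_of_natDegree_le_of_leadingCoeff (minpoly.dvd _ _ haev) hdeg'.le
      (by rw [(minpoly.monic hβk).leadingCoeff, hmono.leadingCoeff])).symm
  have hminF : minpoly (↥F) β = (minpoly (↥k) β).map ι := by rw [← hmap, hp₀min]
  -- memberships
  have hFL : ∀ x : Ω, x ∈ F → x ∈ L := fun x hx => L.algebraMap_mem ⟨x, hx⟩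
  have hkK : ∀ x : Ω, x ∈ k → x ∈ K := fun x hx => K.algebraMap_mem ⟨x, hx⟩
  have hKL : ∀ x : Ω, x ∈ K → x ∈ L := by
    intro x hx
    induction hx using IntermediateField.adjoin_induction with
    | mem y hy => rw [Set.mem_singleton_iff] at hy; exact hy ▸ hβL
    | algebraMap c => exact hFL _ (hkF c.2)
    | add x y _ _ hx hy => exact add_mem hx hy
    | inv x _ hx => exact inv_mem hx
    | mul x y _ _ hx hy => exact mul_mem hx hy
  -- roots of p₀ lie in K
  have hrootK : ∀ y : Ω, Polynomial.aeval y p₀ = 0 → y ∈ K := by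
    intro y hy
    have hsp : (p₀.map (algebraMap (↥k) K)).Splits :=
      hsplit
    have hrm := hsp.roots_map (algebraMap K Ω)
    have hmm : (p₀.map (algebraMap (↥k) K)).map (algebraMap K Ω)
        = p₀.map (algebraMap (↥k) Ω) := by
      rw [Polynomial.map_map, ← IsScalarTower.algebraMap_eq]
    have hy' : y ∈ (p₀.map (algebraMap (↥k) Ω)).roots := by
      rw [Polynomial.mem_roots_map hp₀0, ← Polynomial.aeval_def]
      exact hy
    rw [← hmm, hrm] at hy'
    obtain ⟨z, _, hzy⟩ := Multiset.mem_map.mp hy'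
    exact hzy ▸ z.2
  -- image of β under a k-automorphism of K is a root of p₀
  have hroot : ∀ τ : K ≃ₐ[↥k] K, Polynomial.aeval ((τ ⟨β, hβK⟩ : K) : Ω) p₀ = 0 := by
    intro τ
    have h1 : minpoly (↥k) β = minpoly (↥k) (⟨β, hβK⟩ : K) :=
      minpoly.algebraMap_eq (algebraMap (↥K) Ω).injective (⟨β, hβK⟩ : K)
    have h2 : Polynomial.aeval (τ ⟨β, hβK⟩) (minpoly (↥k) (⟨β, hβK⟩ : K)) = 0 := by
      rw [← minpoly.algEquiv_eq τ (⟨β, hβK⟩ : K)]; exact minpoly.aeval _ _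
    have h3 := Polynomial.aeval_algHom_apply K.val (τ ⟨β, hβK⟩)
      (minpoly (↥k) (⟨β, hβK⟩ : K))
    rw [h2, map_zero] at h3
    rw [hp₀min, h1]
    exact h3
  -- lifting a k-automorphism of K to an F-hom L → Ω
  have liftdef : ∀ τ : K ≃ₐ[↥k] K,
      ∃ g : L →ₐ[↥F] Ω, g ⟨β, hβL⟩ = ((τ ⟨β, hβK⟩ : K) : Ω) := by
    intro τ
    have hmem : ((τ ⟨β, hβK⟩ : K) : Ω) ∈ (minpoly (↥F) β).aroots Ω := by
      rw [Polynomial.mem_aroots]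
      exact ⟨minpoly.ne_zero hβ, by rw [hminF, hmapaev, ← hp₀min]; exact hroot τ⟩
    exact ⟨(IntermediateField.algHomAdjoinIntegralEquiv (↥F) hβ).symm ⟨_, hmem⟩,
      IntermediateField.algHomAdjoinIntegralEquiv_symm_apply_gen (↥F) hβ _⟩
  choose g hg using liftdef
  -- g τ maps L into L
  have hgL : ∀ (τ : K ≃ₐ[↥k] K) (x : Ω) (hx : x ∈ L), g τ ⟨x, hx⟩ ∈ L := by
    intro τ x hx
    induction hx using IntermediateField.adjoin_induction with
    | mem y hy =>
        rw [Set.mem_singleton_iff] at hy; subst hy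
        show g τ ⟨y, hβL⟩ ∈ L
        rw [hg τ]
        exact hKL _ (τ ⟨y, hβK⟩).2
    | algebraMap c =>
        rw [show (⟨algebraMap (↥F) Ω c, IntermediateField.algebraMap_mem L c⟩ : L) = algebraMap (↥F) L c from rfl,
          AlgHom.commutes]
        exact hFL _ c.2
    | add y z hy hz ihy ihz =>
        rw [show (⟨y + z, add_mem hy hz⟩ : L) = ⟨y, hy⟩ + ⟨z, hz⟩ from rfl, map_add]
        exact add_mem ihy ihz
    | inv y hy ihy =>
        rw [show (⟨y⁻¹, inv_mem hy⟩ : L) = (⟨y, hy⟩ : L)⁻¹ from rfl, map_inv₀]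
        exact inv_mem ihy
    | mul y z hy hz ihy ihz =>
        rw [show (⟨y * z, mul_mem hy hz⟩ : L) = ⟨y, hy⟩ * ⟨z, hz⟩ from rfl, map_mul]
        exact mul_mem ihy ihz
  -- g τ agrees with τ on K
  have hgK : ∀ (τ : K ≃ₐ[↥k] K) (x : Ω) (hx : x ∈ K),
      g τ ⟨x, hKL x hx⟩ = ((τ ⟨x, hx⟩ : K) : Ω) := by
    intro τ x hx
    induction hx using IntermediateField.adjoin_induction with
    | mem y hy =>
        rw [Set.mem_singleton_iff] at hy; subst hy
        show g τ ⟨y, hβL⟩ = ((τ ⟨y, hβK⟩ : K) : Ω)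
        rw [hg τ]
    | algebraMap c =>
        rw [show (⟨algebraMap (↥k) Ω c, hKL _ (IntermediateField.algebraMap_mem K c)⟩ : L)
            = algebraMap (↥F) L (ι c) from rfl, AlgHom.commutes,
          show (⟨algebraMap (↥k) Ω c, IntermediateField.algebraMap_mem K c⟩ : K) = algebraMap (↥k) K c from rfl,
          AlgEquiv.commutes]
        rfl
    | add y z hy hz ihy ihz =>
        rw [show (⟨y + z, hKL _ (add_mem hy hz)⟩ : L) = ⟨y, hKL y hy⟩ + ⟨z, hKL z hz⟩ from rfl,
          map_add, ihy, ihz,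
          show (⟨y + z, add_mem hy hz⟩ : K) = ⟨y, hy⟩ + ⟨z, hz⟩ from rfl, map_add]
        rfl
    | inv y hy ihy =>
        rw [show (⟨y⁻¹, hKL _ (inv_mem hy)⟩ : L) = (⟨y, hKL y hy⟩ : L)⁻¹ from rfl, map_inv₀,
          ihy, show (⟨y⁻¹, inv_mem hy⟩ : K) = (⟨y, hy⟩ : K)⁻¹ from rfl, map_inv₀]
        rfl
    | mul y z hy hz ihy ihz =>
        rw [show (⟨y * z, hKL _ (mul_mem hy hz)⟩ : L) = ⟨y, hKL y hy⟩ * ⟨z, hKL z hz⟩ from rfl,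
          map_mul, ihy, ihz,
          show (⟨y * z, mul_mem hy hz⟩ : K) = ⟨y, hy⟩ * ⟨z, hz⟩ from rfl, map_mul]
        rfl
  -- E τ : the lifted automorphism of L
  have Edef : ∀ τ : K ≃ₐ[↥k] K, ∃ Eτ : L ≃ₐ[↥F] L,
      ∀ (x : Ω) (hx : x ∈ L), ((Eτ ⟨x, hx⟩ : L) : Ω) = g τ ⟨x, hx⟩ := by
    intro τ
    have hGdef : ∀ x : L, g τ x ∈ L := fun x => hgL τ x.1 x.2
    let G : L →ₐ[↥F] L :=
      { toFun := fun x => ⟨g τ x, hGdef x⟩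
        map_one' := Subtype.ext (map_one (g τ))
        map_mul' := fun x y => Subtype.ext (map_mul (g τ) x y)
        map_zero' := Subtype.ext (map_zero (g τ))
        map_add' := fun x y => Subtype.ext (map_add (g τ) x y)
        commutes' := fun c => Subtype.ext ((g τ).commutes c) }
    exact ⟨AlgEquiv.ofBijective G G.bijective, fun x hx => rfl⟩
  choose E hE using Edef
  have hcompat : ∀ (τ : K ≃ₐ[↥k] K) (x : Ω) (hx : x ∈ K),
      ((E τ ⟨x, hKL x hx⟩ : L) : Ω) = ((τ ⟨x, hx⟩ : K) : Ω) := by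
    intro τ x hx
    rw [hE τ _ (hKL x hx)]
    exact hgK τ x hx
  -- restriction: an F-automorphism of L maps K into K
  have hσK : ∀ (σ : L ≃ₐ[↥F] L) (x : Ω) (hx : x ∈ K), ((σ ⟨x, hKL x hx⟩ : L) : Ω) ∈ K := by
    intro σ x hx
    induction hx using IntermediateField.adjoin_induction with
    | mem y hy =>
        rw [Set.mem_singleton_iff] at hy; subst hy
        apply hrootK
        have h2 : Polynomial.aeval (σ ⟨y, hβL⟩) (minpoly (↥F) (⟨y, hβL⟩ : L)) = 0 := by
          rw [← minpoly.algEquiv_eq σ (⟨y, hβL⟩ : L)]; exact minpoly.aeval _ _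
        have h3 := Polynomial.aeval_algHom_apply L.val (σ ⟨y, hβL⟩)
          (minpoly (↥F) (⟨y, hβL⟩ : L))
        rw [h2, map_zero] at h3
        have h1 : minpoly (↥F) y = minpoly (↥F) (⟨y, hβL⟩ : L) :=
          minpoly.algebraMap_eq (algebraMap (↥L) Ω).injective (⟨y, hβL⟩ : L)
        rw [← h1, hminF, hmapaev, ← hp₀min] at h3
        exact h3
    | algebraMap c =>
        rw [show (⟨algebraMap (↥k) Ω c, hKL _ (IntermediateField.algebraMap_mem K c)⟩ : L)
            = algebraMap (↥F) L (ι c) from rfl, AlgEquiv.commutes]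
        exact hkK _ c.2
    | add y z hy hz ihy ihz =>
        rw [show (⟨y + z, hKL _ (add_mem hy hz)⟩ : L) = ⟨y, hKL y hy⟩ + ⟨z, hKL z hz⟩ from rfl,
          map_add]
        exact add_mem ihy ihz
    | inv y hy ihy =>
        rw [show (⟨y⁻¹, hKL _ (inv_mem hy)⟩ : L) = (⟨y, hKL y hy⟩ : L)⁻¹ from rfl, map_inv₀]
        exact inv_mem ihy
    | mul y z hy hz ihy ihz =>
        rw [show (⟨y * z, hKL _ (mul_mem hy hz)⟩ : L) = ⟨y, hKL y hy⟩ * ⟨z, hKL z hz⟩ from rfl,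
          map_mul]
        exact mul_mem ihy ihz
  -- the restriction r σ
  have rdef : ∀ σ : L ≃ₐ[↥F] L, ∃ rσ : K ≃ₐ[↥k] K,
      ∀ (x : Ω) (hx : x ∈ K), ((rσ ⟨x, hx⟩ : K) : Ω) = ((σ ⟨x, hKL x hx⟩ : L) : Ω) := by
    intro σ
    let R : K →ₐ[↥k] K :=
      { toFun := fun x => ⟨(σ ⟨x.1, hKL x.1 x.2⟩ : L), hσK σ x.1 x.2⟩
        map_one' := by
          apply Subtype.ext
          show ((σ (1 : L) : L) : Ω) = ((1 : K) : Ω)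
          rw [map_one]
          rfl
        map_mul' := fun x y => by
          apply Subtype.ext
          show ((σ ((⟨x.1, hKL x.1 x.2⟩ : L) * (⟨y.1, hKL y.1 y.2⟩ : L)) : L) : Ω) = _
          rw [map_mul]
          rfl
        map_zero' := by
          apply Subtype.ext
          show ((σ (0 : L) : L) : Ω) = ((0 : K) : Ω)
          rw [map_zero]
          rfl
        map_add' := fun x y => by
          apply Subtype.ext
          show ((σ ((⟨x.1, hKL x.1 x.2⟩ : L) + (⟨y.1, hKL y.1 y.2⟩ : L)) : L) : Ω) = _
          rw [map_add]
          rfl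
        commutes' := fun c => by
          apply Subtype.ext
          show ((σ (algebraMap (↥F) L (ι c)) : L) : Ω) = _
          rw [AlgEquiv.commutes]
          rfl }
    exact ⟨AlgEquiv.ofBijective R R.bijective, fun x hx => rfl⟩
  choose r hr using rdef
  -- r (E τ) = τ
  have hrE : ∀ τ : K ≃ₐ[↥k] K, r (E τ) = τ := by
    intro τ
    apply AlgEquiv.ext
    intro x
    apply Subtype.ext
    rw [hr (E τ) x.1 x.2, hcompat τ x.1 x.2]
  -- E (r σ) = σ
  have hEr : ∀ σ : L ≃ₐ[↥F] L, E (r σ) = σ := by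
    intro σ
    apply AlgEquiv.coe_algHom_injective
    apply IntermediateField.adjoin_algHom_ext
    intro x hx
    rw [Set.mem_singleton_iff] at hx; subst hx
    apply Subtype.ext
    show ((E (r σ) ⟨x, hβL⟩ : L) : Ω) = ((σ ⟨x, hβL⟩ : L) : Ω)
    rw [hE (r σ) x hβL, hg (r σ), hr σ x hβK]
  -- r is multiplicative
  have hrmul : ∀ σ₁ σ₂ : L ≃ₐ[↥F] L, r (σ₁ * σ₂) = r σ₁ * r σ₂ := by
    intro σ₁ σ₂
    apply AlgEquiv.ext
    intro x
    apply Subtype.ext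
    have h2 : ((r σ₂ x : K) : Ω) = ((σ₂ ⟨x.1, hKL x.1 x.2⟩ : L) : Ω) := hr σ₂ x.1 x.2
    have h1 := hr σ₁ ((r σ₂ x : K) : Ω) (r σ₂ x).2
    show ((r (σ₁ * σ₂) x : K) : Ω) = ((r σ₁ (r σ₂ x) : K) : Ω)
    rw [hr (σ₁ * σ₂) x.1 x.2]
    rw [show (r σ₂ x : K) = ⟨((r σ₂ x : K) : Ω), (r σ₂ x).2⟩ from rfl] at h1 ⊢
    rw [h1]
    have : (⟨((r σ₂ x : K) : Ω), hKL _ (r σ₂ x).2⟩ : L) = σ₂ ⟨x.1, hKL x.1 x.2⟩ :=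
      Subtype.ext h2
    rw [this]
    rfl
  -- assemble the multiplicative equivalence
  let req : (L ≃ₐ[↥F] L) ≃* (K ≃ₐ[↥k] K) :=
    { toFun := r
      invFun := E
      left_inv := hEr
      right_inv := hrE
      map_mul' := hrmul }
  haveI hgalK : IsGalois (↥k) K := hgal
  refine ⟨?_, ⟨req.symm, ?_⟩, ?_⟩
  · -- K ∩ F = k
    apply Set.ext
    intro x
    constructor
    · rintro ⟨hxK, hxF⟩
      have hfix : ∀ τ : K ≃ₐ[↥k] K, τ ⟨x, hxK⟩ = ⟨x, hxK⟩ := by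
        intro τ
        apply Subtype.ext
        rw [← hcompat τ x hxK]
        rw [show (⟨x, hKL x hxK⟩ : L) = algebraMap (↥F) L ⟨x, hxF⟩ from rfl,
          AlgEquiv.commutes]
        rfl
      have hmemfix : (⟨x, hxK⟩ : K) ∈
          IntermediateField.fixedField (⊤ : Subgroup (K ≃ₐ[↥k] K)) :=
        fun g => hfix g.1
      have htop : IntermediateField.fixingSubgroup (⊥ : IntermediateField (↥k) K) = ⊤ := by
        apply Subgroup.ext
        intro τ
        simp only [Subgroup.mem_top, iff_true]
        rw [IntermediateField.mem_fixingSubgroup_iff]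
        intro y hy
        rw [IntermediateField.mem_bot] at hy
        obtain ⟨c, rfl⟩ := hy
        exact τ.commutes c
      have hbot := IsGalois.fixedField_fixingSubgroup (⊥ : IntermediateField (↥k) K)
      rw [htop] at hbot
      rw [hbot] at hmemfix
      rw [IntermediateField.mem_bot] at hmemfix
      obtain ⟨c, hc⟩ := hmemfix
      have : (c : Ω) = x := congrArg Subtype.val hc
      exact this ▸ c.2
    · intro hx
      exact ⟨hkK x hx, hkF hx⟩
  · -- compatibility
    intro σ x hx1 hx2
    exact hcompat σ x hx1
  · -- abelian
    intro hab σ τ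
    have h := congrArg req (hab (req.symm σ) (req.symm τ))
    rw [map_mul, map_mul, MulEquiv.apply_symm_apply, MulEquiv.apply_symm_apply] at h
    exact h
end

section
/- Every element a of the finite ideles 𝔸_f^× of ℚ admits a unique factorization a = q·u with q a positive rational number and u ∈ Ẑ^× (the units of the profinite completion of ℤ); equivalently 𝔸_f^× ≅ ℚ_{>0} × Ẑ^×. -/
open IsDedekindDomain

namespace FiniteIdeleFactorizationAux

open IsDedekindDomain.HeightOneSpectrum
open scoped Multiplicative WithZero

/-! ### A uniformizer for each height one prime of `ℤ` -/

noncomputable def unifN (v : HeightOneSpectrum ℤ) : ℕ :=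
  (Submodule.IsPrincipal.generator v.asIdeal).natAbs

lemma unif_span (v : HeightOneSpectrum ℤ) : Ideal.span {(unifN v : ℤ)} = v.asIdeal := by
  rw [unifN, Int.span_natAbs, Ideal.span_singleton_generator]

lemma unif_pos (v : HeightOneSpectrum ℤ) : 0 < unifN v := by
  rw [Nat.pos_iff_ne_zero, unifN, Int.natAbs_ne_zero]
  intro h
  apply v.ne_bot
  rw [← Ideal.span_singleton_generator v.asIdeal, h]
  simp

lemma unif_val (v : HeightOneSpectrum ℤ) :
    v.intValuation (unifN v : ℤ) = Multiplicative.ofAdd (-1 : ℤ) := by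
  have hne : v.intValuation (unifN v : ℤ) ≠ 0 :=
    v.intValuation_ne_zero _ (by exact_mod_cast (unif_pos v).ne')
  have h1 : v.intValuation (unifN v : ℤ) ≤ WithZero.exp (-(1:ℕ) : ℤ) := by
    rw [intValuation_le_pow_iff_dvd, pow_one, unif_span]
  have h2 : ¬ v.intValuation (unifN v : ℤ) ≤ WithZero.exp (-(2:ℕ) : ℤ) := by
    rw [intValuation_le_pow_iff_dvd, unif_span]
    intro hdvd
    obtain ⟨c, hc⟩ := hdvd
    have hb : v.asIdeal ≠ ⊥ := v.ne_bot
    have : (1 : Ideal ℤ) = v.asIdeal * c := by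
      apply mul_left_cancel₀ hb
      rw [mul_one, ← mul_assoc, ← sq, ← hc]
    have hu : IsUnit v.asIdeal := IsUnit.of_mul_eq_one _ this.symm
    exact v.isPrime.ne_top (Ideal.isUnit_iff.mp hu)
  obtain ⟨x, hx⟩ := WithZero.ne_zero_iff_exists.mp hne
  rw [← hx] at h1 h2 ⊢
  rw [WithZero.exp, WithZero.coe_le_coe] at h1
  rw [WithZero.exp, WithZero.coe_le_coe] at h2
  rw [WithZero.coe_inj]
  have h1' : Multiplicative.toAdd x ≤ -1 := h1
  have h2' : ¬ Multiplicative.toAdd x ≤ -2 := h2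
  have : Multiplicative.toAdd x = -1 := by omega
  rw [← this]; rfl

lemma unif_val_ne (v w : HeightOneSpectrum ℤ) (hvw : w ≠ v) :
    w.intValuation (unifN v : ℤ) = 1 := by
  refine le_antisymm (w.intValuation_le_one _) ?_
  by_contra hlt
  rw [not_le] at hlt
  have := (w.intValuation_lt_one_iff_dvd _).mp hlt
  rw [unif_span] at this
  have hle := Ideal.le_of_dvd this
  exact hvw (HeightOneSpectrum.ext (v.isMaximal.eq_of_le w.isPrime.ne_top hle)).symm

/-! ### A positive rational with prescribed valuations -/

lemma zpow_ofAdd_neg_one (n : ℤ) :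
    ((Multiplicative.ofAdd (-1 : ℤ) : Multiplicative ℤ) : ℤᵐ⁰) ^ (-n)
      = ((Multiplicative.ofAdd n : Multiplicative ℤ) : ℤᵐ⁰) := by
  rw [← WithZero.coe_zpow, WithZero.coe_inj, ← ofAdd_zsmul, smul_eq_mul]
  ring_nf

lemma exists_rat_of_val (m : HeightOneSpectrum ℤ → ℤ) (hfin : {v | m v ≠ 0}.Finite) :
    ∃ q : ℚ, 0 < q ∧ ∀ v : HeightOneSpectrum ℤ,
      v.valuation ℚ (q : ℚ) = ((Multiplicative.ofAdd (m v) : Multiplicative ℤ) : ℤᵐ⁰) := by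
  classical
  set S := hfin.toFinset with hS
  refine ⟨∏ w ∈ S, (unifN w : ℚ) ^ (-(m w)), ?_, ?_⟩
  · exact Finset.prod_pos fun w _ => zpow_pos (by exact_mod_cast unif_pos w) _
  · intro v
    have hval : ∀ w : HeightOneSpectrum ℤ,
        v.valuation ℚ ((unifN w : ℚ)) = v.intValuation (unifN w : ℤ) := by
      intro w
      have h : ((unifN w : ℕ) : ℚ) = algebraMap ℤ ℚ ((unifN w : ℕ) : ℤ) := by
        simp [algebraMap_int_eq]
      rw [h, valuation_of_algebraMap]
    rw [map_prod]
    have hterm : ∀ w ∈ S, v.valuation ℚ ((unifN w : ℚ) ^ (-(m w)))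
        = (v.intValuation (unifN w : ℤ)) ^ (-(m w)) := by
      intro w _
      rw [map_zpow₀, hval w]
    rw [Finset.prod_congr rfl hterm]
    by_cases hv : v ∈ S
    · rw [Finset.prod_eq_single_of_mem v hv
        (fun w _ hne => by rw [unif_val_ne w v hne.symm, one_zpow]),
        unif_val, zpow_ofAdd_neg_one]
    · have hm0 : m v = 0 := by
        by_contra h
        exact hv (hfin.mem_toFinset.mpr h)
      rw [Finset.prod_eq_one (fun w hw => by
        have : w ≠ v := fun h => hv (h ▸ hw)
        rw [unif_val_ne w v this.symm, one_zpow]), hm0]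
      rfl

/-! ### A positive rational with all valuations 1 equals 1 -/

def primeHOS (p : ℕ) (hp : p.Prime) : HeightOneSpectrum ℤ where
  asIdeal := Ideal.span {(p : ℤ)}
  isPrime := by
    rw [Ideal.span_singleton_prime (by exact_mod_cast hp.ne_zero)]
    exact Nat.prime_iff_prime_int.mp hp
  ne_bot := by
    simp only [ne_eq, Ideal.span_singleton_eq_bot]
    exact_mod_cast hp.ne_zero

lemma rat_eq_one_of_val (r : ℚ) (hr : 0 < r)
    (h : ∀ v : HeightOneSpectrum ℤ, v.valuation ℚ (r : ℚ) = 1) : r = 1 := by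
  have hden : ∀ v : HeightOneSpectrum ℤ,
      v.intValuation (r.num) = v.intValuation ((r.den : ℤ)) := by
    intro v
    have h1 : v.valuation ℚ ((r.num : ℚ)) = v.intValuation r.num := by
      rw [show ((r.num : ℤ) : ℚ) = algebraMap ℤ ℚ r.num by simp [algebraMap_int_eq],
        valuation_of_algebraMap]
    have h2 : v.valuation ℚ (((r.den : ℤ) : ℚ)) = v.intValuation (r.den : ℤ) := by
      rw [show (((r.den : ℤ)) : ℚ) = algebraMap ℤ ℚ (r.den : ℤ) by simp [algebraMap_int_eq],
        valuation_of_algebraMap]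
    have : v.valuation ℚ ((r.num : ℚ)) = v.valuation ℚ r * v.valuation ℚ (((r.den:ℤ) : ℚ)) := by
      have e : ((r.num : ℤ) : ℚ) = r * ((r.den : ℤ) : ℚ) := by push_cast; exact (Rat.mul_den_eq_num r).symm
      rw [e, map_mul]
    rw [h1, h2, h v, one_mul] at this
    exact this
  have hdvd : ∀ p : ℕ, p.Prime → ((p:ℤ) ∣ r.num ↔ (p:ℤ) ∣ (r.den : ℤ)) := by
    intro p hp
    have := hden (primeHOS p hp)
    constructor
    · intro hd
      by_contra hnd
      have hlt : (primeHOS p hp).intValuation r.num < 1 := by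
        rw [intValuation_lt_one_iff_dvd]
        show Ideal.span {(p:ℤ)} ∣ _
        rwa [span_singleton_dvd_span_singleton_iff_dvd]
      rw [this, intValuation_lt_one_iff_dvd] at hlt
      rw [show (primeHOS p hp).asIdeal = Ideal.span {(p:ℤ)} from rfl,
        span_singleton_dvd_span_singleton_iff_dvd] at hlt
      exact hnd hlt
    · intro hd
      by_contra hnd
      have hlt : (primeHOS p hp).intValuation ((r.den:ℤ)) < 1 := by
        rw [intValuation_lt_one_iff_dvd]
        show Ideal.span {(p:ℤ)} ∣ _
        rwa [span_singleton_dvd_span_singleton_iff_dvd]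
      rw [← this, intValuation_lt_one_iff_dvd] at hlt
      rw [show (primeHOS p hp).asIdeal = Ideal.span {(p:ℤ)} from rfl,
        span_singleton_dvd_span_singleton_iff_dvd] at hlt
      exact hnd hlt
  have hnum_pos : 0 < r.num := Rat.num_pos.mpr hr
  have hco : Nat.Coprime r.num.natAbs r.den := r.reduced
  have hden1 : r.den = 1 := by
    by_contra hne
    obtain ⟨p, hp, hpd⟩ := Nat.exists_prime_and_dvd hne
    have h1 : (p:ℤ) ∣ (r.den : ℤ) := Int.natCast_dvd_natCast.mpr hpd
    have h2 : (p:ℤ) ∣ r.num := (hdvd p hp).mpr h1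
    have h3 : p ∣ r.num.natAbs := Int.natCast_dvd.mp h2
    exact hp.one_lt.ne' (Nat.eq_one_of_dvd_coprimes hco h3 hpd)
  have hnum1 : r.num = 1 := by
    by_contra hne
    have hna : r.num.natAbs ≠ 1 := by
      intro h1
      apply hne
      omega
    obtain ⟨p, hp, hpd⟩ := Nat.exists_prime_and_dvd hna
    have h2 : (p:ℤ) ∣ r.num := Int.natCast_dvd.mpr hpd
    have h1 : (p:ℤ) ∣ (r.den : ℤ) := (hdvd p hp).mp h2
    have h3 : p ∣ r.den := Int.natCast_dvd_natCast.mp h1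
    exact hp.one_lt.ne' (Nat.eq_one_of_dvd_coprimes hco hpd h3)
  have := r.num_div_den
  rw [hnum1, hden1] at this
  simpa using this.symm

/-! ### Coordinates of finite adeles -/

lemma valAlgFAR (q : ℚ) (v : HeightOneSpectrum ℤ) :
    Valued.v ((algebraMap ℚ (FiniteAdeleRing ℤ ℚ) q) v) = v.valuation ℚ q := by
  rw [FiniteAdeleRing.algebraMap_apply, valuedAdicCompletion_eq_valuation']

lemma unitsFAR_val_mul (b : (FiniteAdeleRing ℤ ℚ)ˣ) (v : HeightOneSpectrum ℤ) :
    Valued.v ((b : FiniteAdeleRing ℤ ℚ) v)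
      * Valued.v ((↑(b⁻¹) : FiniteAdeleRing ℤ ℚ) v) = 1 := by
  have h : ((b : FiniteAdeleRing ℤ ℚ) * ↑(b⁻¹)) v = (1 : FiniteAdeleRing ℤ ℚ) v := by
    rw [Units.mul_inv]
  calc Valued.v ((b : FiniteAdeleRing ℤ ℚ) v) * Valued.v ((↑(b⁻¹) : FiniteAdeleRing ℤ ℚ) v)
      = Valued.v (((b : FiniteAdeleRing ℤ ℚ) * ↑(b⁻¹)) v) := (map_mul Valued.v _ _).symm
    _ = Valued.v ((1 : FiniteAdeleRing ℤ ℚ) v) := by rw [h]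
    _ = 1 := map_one Valued.v

end FiniteIdeleFactorizationAux

open FiniteIdeleFactorizationAux IsDedekindDomain.HeightOneSpectrum
open scoped Multiplicative WithZero

/-- Every finite idele of `ℚ` (unit of the finite adele ring `𝔸_f`) admits a unique
factorization `a = q·u` with `q` a positive rational number and `u ∈ Ẑ^×`, i.e. `u` a unit
which together with its inverse is everywhere integral; equivalently
`𝔸_f^× ≅ ℚ_{>0} × Ẑ^×`. -/
theorem finite_idele_factorization (a : (FiniteAdeleRing ℤ ℚ)ˣ) :
    ∃! p : ℚ × (FiniteAdeleRing ℤ ℚ)ˣ,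
      0 < p.1 ∧
      (∀ v : HeightOneSpectrum ℤ,
        ((p.2 : FiniteAdeleRing ℤ ℚ) v ∈ v.adicCompletionIntegers ℚ ∧
          ((↑(p.2⁻¹) : FiniteAdeleRing ℤ ℚ) v ∈ v.adicCompletionIntegers ℚ))) ∧
      (a : FiniteAdeleRing ℤ ℚ) =
        algebraMap ℚ (FiniteAdeleRing ℤ ℚ) p.1 * (p.2 : FiniteAdeleRing ℤ ℚ) := by
  classical
  have hne : ∀ v : HeightOneSpectrum ℤ, Valued.v ((a : FiniteAdeleRing ℤ ℚ) v) ≠ 0 := by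
    intro v h0
    have := unitsFAR_val_mul a v
    rw [h0, zero_mul] at this
    exact zero_ne_one this
  set m : HeightOneSpectrum ℤ → ℤ :=
    fun v => Multiplicative.toAdd (WithZero.unzero (hne v)) with hm
  have hmval : ∀ v, Valued.v ((a : FiniteAdeleRing ℤ ℚ) v)
      = ((Multiplicative.ofAdd (m v) : Multiplicative ℤ) : ℤᵐ⁰) := by
    intro v
    rw [hm]
    simp only [ofAdd_toAdd, WithZero.coe_unzero]
  -- finiteness of the support of m
  have hfin : {v | m v ≠ 0}.Finite := by
    have h1 := (a : FiniteAdeleRing ℤ ℚ).2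
    have h2 := (↑(a⁻¹) : FiniteAdeleRing ℤ ℚ).2
    have h3 := h1.and h2
    rw [Filter.eventually_cofinite] at h3
    refine h3.subset ?_
    intro v hv
    simp only [Set.mem_setOf_eq] at hv ⊢
    intro hmem
    apply hv
    obtain ⟨hmem1, hmem2⟩ := hmem
    change Valued.v ((a : FiniteAdeleRing ℤ ℚ) v) ≤ 1 at hmem1
    change Valued.v ((↑(a⁻¹) : FiniteAdeleRing ℤ ℚ) v) ≤ 1 at hmem2
    have hprod := unitsFAR_val_mul a v
    have hv1 : Valued.v ((a : FiniteAdeleRing ℤ ℚ) v) = 1 := by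
      refine le_antisymm hmem1 ?_
      calc (1 : ℤᵐ⁰) = _ := hprod.symm
        _ ≤ Valued.v ((a : FiniteAdeleRing ℤ ℚ) v) * 1 := mul_le_mul_right hmem2 _
        _ = _ := mul_one _
    rw [hmval v] at hv1
    have : Multiplicative.ofAdd (m v) = (1 : Multiplicative ℤ) := by
      exact_mod_cast hv1
    exact ofAdd_eq_one.mp this
  obtain ⟨q, hq0, hqv⟩ := exists_rat_of_val m hfin
  have hqne : q ≠ 0 := hq0.ne'
  set qu : (FiniteAdeleRing ℤ ℚ)ˣ :=
    Units.map (algebraMap ℚ (FiniteAdeleRing ℤ ℚ)).toMonoidHom (Units.mk0 q hqne) with hqu_def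
  set u : (FiniteAdeleRing ℤ ℚ)ˣ := qu⁻¹ * a with hu_def
  have hqu : (qu : FiniteAdeleRing ℤ ℚ) = algebraMap ℚ (FiniteAdeleRing ℤ ℚ) q := rfl
  have hqui : (↑(qu⁻¹) : FiniteAdeleRing ℤ ℚ) = algebraMap ℚ (FiniteAdeleRing ℤ ℚ) q⁻¹ := rfl
  have huval : ∀ v, Valued.v ((u : FiniteAdeleRing ℤ ℚ) v) = 1 := by
    intro v
    have hc : (u : FiniteAdeleRing ℤ ℚ) v
        = (↑(qu⁻¹) : FiniteAdeleRing ℤ ℚ) v * (a : FiniteAdeleRing ℤ ℚ) v := rfl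
    rw [hc, map_mul, hqui, valAlgFAR, map_inv₀, hqv v, hmval v,
      inv_mul_cancel₀ WithZero.coe_ne_zero]
  have huival : ∀ v, Valued.v ((↑(u⁻¹) : FiniteAdeleRing ℤ ℚ) v) = 1 := by
    intro v
    have := unitsFAR_val_mul u v
    rwa [huval v, one_mul] at this
  have hmem : ∀ v : HeightOneSpectrum ℤ,
      ((u : FiniteAdeleRing ℤ ℚ) v ∈ v.adicCompletionIntegers ℚ ∧
        ((↑(u⁻¹) : FiniteAdeleRing ℤ ℚ) v ∈ v.adicCompletionIntegers ℚ)) := by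
    intro v
    constructor
    · rw [mem_adicCompletionIntegers, huval v]
    · rw [mem_adicCompletionIntegers, huival v]
  have heq : (a : FiniteAdeleRing ℤ ℚ)
      = algebraMap ℚ (FiniteAdeleRing ℤ ℚ) q * (u : FiniteAdeleRing ℤ ℚ) := by
    rw [← hqu, hu_def]
    have : (↑(qu⁻¹ * a) : FiniteAdeleRing ℤ ℚ)
        = (↑(qu⁻¹) : FiniteAdeleRing ℤ ℚ) * (a : FiniteAdeleRing ℤ ℚ) := rfl
    rw [this, ← mul_assoc, ← Units.val_mul, mul_inv_cancel, Units.val_one, one_mul]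
  refine ⟨⟨q, u⟩, ⟨hq0, hmem, heq⟩, ?_⟩
  rintro ⟨q', u'⟩ ⟨hq', hmem', heq'⟩
  dsimp only at hq' hmem' heq' ⊢
  have hu'val : ∀ v, Valued.v ((u' : FiniteAdeleRing ℤ ℚ) v) = 1 := by
    intro v
    obtain ⟨h1, h2⟩ := hmem' v
    rw [mem_adicCompletionIntegers] at h1 h2
    have hprod := unitsFAR_val_mul u' v
    refine le_antisymm h1 ?_
    calc (1 : ℤᵐ⁰) = _ := hprod.symm
      _ ≤ Valued.v ((u' : FiniteAdeleRing ℤ ℚ) v) * 1 := mul_le_mul_right h2 _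
      _ = _ := mul_one _
  have hq'val : ∀ v : HeightOneSpectrum ℤ,
      v.valuation ℚ (q' : ℚ) = ((Multiplicative.ofAdd (m v) : Multiplicative ℤ) : ℤᵐ⁰) := by
    intro v
    have hc : (a : FiniteAdeleRing ℤ ℚ) v
        = (algebraMap ℚ (FiniteAdeleRing ℤ ℚ) q') v * (u' : FiniteAdeleRing ℤ ℚ) v := by
      rw [heq']; rfl
    have := congrArg Valued.v hc
    rw [map_mul, hu'val v, mul_one, valAlgFAR, hmval v] at this
    exact this.symm
  have hq'q : q' = q := by
    have hrpos : 0 < q' / q := div_pos hq' hq0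
    have hval1 : ∀ v : HeightOneSpectrum ℤ, v.valuation ℚ ((q' / q : ℚ)) = 1 := by
      intro v
      rw [div_eq_mul_inv, map_mul, map_inv₀, hq'val v, hqv v,
        mul_inv_cancel₀ WithZero.coe_ne_zero]
    have := rat_eq_one_of_val _ hrpos hval1
    field_simp at this
    exact this
  have hu'u : u' = u := by
    have hcanc : ∀ x y : FiniteAdeleRing ℤ ℚ,
        (algebraMap ℚ (FiniteAdeleRing ℤ ℚ) q) * x = (algebraMap ℚ (FiniteAdeleRing ℤ ℚ) q) * y
          → x = y := by
      intro x y hxy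
      have := congrArg (fun z => (algebraMap ℚ (FiniteAdeleRing ℤ ℚ) q⁻¹) * z) hxy
      simpa [← mul_assoc, ← map_mul, inv_mul_cancel₀ hqne] using this
    apply Units.ext
    apply hcanc
    rw [← heq, heq', hq'q]
  rw [hq'q, hu'u]
end
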